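/- Let κ be a strongly inaccessible cardinal, let ⟨A_α : α < κ⟩ be a potential ◊_κ sequence, and let 0 < γ < κ. Then the set D_γ is ≤γ-directed closed: for every family ⟨(s_α, c_α) : α < γ⟩ of conditions in D_γ that is directed (any two members of the family have a common lower bound among the members of the family), the pair (s, c̄) with s = ⋃_{α<γ} s_α, c = ⋃_{α<γ} c_α and c̄ = c ∪ {sup(c)} is a condition of the diamond killing poset Q, lies in D_γ, and is a lower bound of every (s_α, c_α). -/

import Mathlib

open Set

/-- `C` is unbounded in `κ`. -/
def IsUnboundedIn (κ : Ordinal.{0}) (C : Set Ordinal.{0}) : Prop :=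
  ∀ α < κ, ∃ β ∈ C, α < β

/-- `C` contains all of its limit points below `κ`. -/
def IsClosedIn (κ : Ordinal.{0}) (C : Set Ordinal.{0}) : Prop :=
  ∀ α < κ, α ≠ 0 → (∀ β < α, ∃ γ ∈ C, β < γ ∧ γ < α) → α ∈ C

/-- `C ⊆ κ` is club in `κ`: unbounded and closed. -/
def IsClubIn (κ : Ordinal.{0}) (C : Set Ordinal.{0}) : Prop :=
  C ⊆ Set.Iio κ ∧ IsUnboundedIn κ C ∧ IsClosedIn κ C

/-- `S` is stationary in `κ`: it meets every club subset of `κ`. -/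
def IsStationaryIn (κ : Ordinal.{0}) (S : Set Ordinal.{0}) : Prop :=
  ∀ C, IsClubIn κ C → (S ∩ C).Nonempty

/-- The ordinal `α` is an infinite regular cardinal. -/
def IsRegOrd (α : Ordinal.{0}) : Prop :=
  ∃ c : Cardinal.{0}, c.IsRegular ∧ α = c.ord

/-- The ordinal `α` is a strongly inaccessible cardinal. -/
def IsInaccOrd (α : Ordinal.{0}) : Prop :=
  ∃ c : Cardinal.{0}, c.IsInaccessible ∧ α = c.ord

/-- `c` is a closed bounded subset of `κ`. -/
def IsClosedBddIn (κ : Ordinal.{0}) (c : Set Ordinal.{0}) : Prop :=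
  c ⊆ Set.Iio κ ∧ (∃ β, β < κ ∧ ∀ α ∈ c, α ≤ β) ∧ IsClosedIn κ c

/-- `p = (s, c)` is a condition of the diamond killing poset for the potential
`◊_κ` sequence `A`: `c` is a closed bounded subset of `κ`, `s ⊆ sup c`, and
`s ∩ α ≠ A α` for every strongly inaccessible `α ∈ c`. -/
def IsCond (κ : Ordinal.{0}) (A : Ordinal.{0} → Set Ordinal.{0})
    (p : Set Ordinal.{0} × Set Ordinal.{0}) : Prop :=
  IsClosedBddIn κ p.2 ∧ p.1 ⊆ Set.Iio (sSup p.2) ∧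
    ∀ α ∈ p.2, IsInaccOrd α → p.1 ∩ Set.Iio α ≠ A α

/-- The ordering of the diamond killing poset: `(s', c') ≤ (s, c)` iff
`s' ∩ sup c = s` and `c' ∩ (sup c + 1) = c`. -/
def CondLE (p q : Set Ordinal.{0} × Set Ordinal.{0}) : Prop :=
  p.1 ∩ Set.Iio (sSup q.2) = q.1 ∧ p.2 ∩ Set.Iic (sSup q.2) = q.2

/-- `D_γ`: the set of conditions `(s, c)` with `c \ γ ≠ ∅`. -/
def DSet (κ : Ordinal.{0}) (A : Ordinal.{0} → Set Ordinal.{0}) (γ : Ordinal.{0}) :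
    Set (Set Ordinal.{0} × Set Ordinal.{0}) :=
  {p | IsCond κ A p ∧ (p.2 \ Set.Iio γ).Nonempty}

/-- For a strongly inaccessible `κ`, a potential `◊_κ` sequence `A` and
`0 < γ < κ`, the set `D_γ` is `≤γ`-directed closed: for every directed family
`⟨(s_α, c_α) : α < γ⟩` of conditions in `D_γ`, the pair `(s, c̄)` with
`s = ⋃_{α<γ} s_α`, `c = ⋃_{α<γ} c_α` and `c̄ = c ∪ {sup c}` is a condition,
lies in `D_γ`, and is a lower bound of every `(s_α, c_α)`. -/
theorem DSet_directed_closed (κ : Cardinal.{0}) (hκ : κ.IsInaccessible)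
    (A : Ordinal.{0} → Set Ordinal.{0}) (hA : ∀ α < κ.ord, A α ⊆ Set.Iio α)
    (γ : Ordinal.{0}) (hγ0 : 0 < γ) (hγ : γ < κ.ord)
    (f : Ordinal.{0} → Set Ordinal.{0} × Set Ordinal.{0})
    (hmem : ∀ α < γ, f α ∈ DSet κ.ord A γ)
    (hdir : ∀ α < γ, ∀ β < γ, ∃ δ < γ, CondLE (f δ) (f α) ∧ CondLE (f δ) (f β)) :
    ∀ s c cbar : Set Ordinal.{0},
      s = (⋃ α ∈ Set.Iio γ, (f α).1) →
      c = (⋃ α ∈ Set.Iio γ, (f α).2) →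
      cbar = c ∪ {sSup c} →
      IsCond κ.ord A (s, cbar) ∧ (s, cbar) ∈ DSet κ.ord A γ ∧
        ∀ α < γ, CondLE (s, cbar) (f α) := by
  intro s c cbar hs hc hcbar
  -- membership characterizations
  have hsmem : ∀ x, x ∈ s ↔ ∃ β, β < γ ∧ x ∈ (f β).1 := by
    intro x; rw [hs]
    simp only [Set.mem_iUnion, Set.mem_Iio, exists_prop]
  have hcmem : ∀ x, x ∈ c ↔ ∃ β, β < γ ∧ x ∈ (f β).2 := by
    intro x; rw [hc]
    simp only [Set.mem_iUnion, Set.mem_Iio, exists_prop]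
  -- basic facts about each condition
  have hcond : ∀ α < γ, IsCond κ.ord A (f α) := fun α hα => (hmem α hα).1
  have hDγ : ∀ α < γ, ∃ e ∈ (f α).2, γ ≤ e := by
    intro α hα
    obtain ⟨e, he1, he2⟩ := (hmem α hα).2
    exact ⟨e, he1, not_lt.1 he2⟩
  have hbdd : ∀ α < γ, BddAbove (f α).2 := by
    intro α hα
    obtain ⟨β, _, hb⟩ := (hcond α hα).1.2.1
    exact ⟨β, hb⟩
  have hne : ∀ α < γ, (f α).2.Nonempty := by
    intro α hα
    obtain ⟨e, he, _⟩ := hDγ α hα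
    exact ⟨e, he⟩
  have hσκ : ∀ α < γ, sSup (f α).2 < κ.ord := by
    intro α hα
    obtain ⟨β, hβ, hb⟩ := (hcond α hα).1.2.1
    exact lt_of_le_of_lt (csSup_le (hne α hα) hb) hβ
  have hγσ : ∀ α < γ, γ ≤ sSup (f α).2 := by
    intro α hα
    obtain ⟨e, he, hge⟩ := hDγ α hα
    exact hge.trans (le_csSup (hbdd α hα) he)
  -- the sup of each c_α belongs to c_α
  have hσmem : ∀ α < γ, sSup (f α).2 ∈ (f α).2 := by
    intro α hα
    by_cases h : sSup (f α).2 ∈ (f α).2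
    · exact h
    · refine (hcond α hα).1.2.2 _ (hσκ α hα) (hγ0.trans_le (hγσ α hα)).ne' ?_
      intro β hβ
      obtain ⟨t, ht, hlt⟩ := exists_lt_of_lt_csSup (hne α hα) hβ
      refine ⟨t, ht, hlt, ?_⟩
      rcases lt_or_eq_of_le (le_csSup (hbdd α hα) ht) with h1 | h1
      · exact h1
      · exact absurd (h1 ▸ ht) h
  -- coherence of the family
  have cohS : ∀ α, α < γ → ∀ β, β < γ →
      (f β).1 ∩ Set.Iio (sSup (f α).2) ⊆ (f α).1 := by
    intro α hα β hβ
    obtain ⟨δ, hδ, hδα, hδβ⟩ := hdir α hα β hβ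
    intro x hx
    have hxδ : x ∈ (f δ).1 := by
      rw [← hδβ.1] at hx; exact hx.1.1
    rw [← hδα.1]
    exact ⟨hxδ, hx.2⟩
  have cohC : ∀ α, α < γ → ∀ β, β < γ →
      (f β).2 ∩ Set.Iic (sSup (f α).2) ⊆ (f α).2 := by
    intro α hα β hβ
    obtain ⟨δ, hδ, hδα, hδβ⟩ := hdir α hα β hβ
    intro x hx
    have hxδ : x ∈ (f δ).2 := by
      rw [← hδβ.2] at hx; exact hx.1.1
    rw [← hδα.2]
    exact ⟨hxδ, hx.2⟩
  -- restrictions of s and c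
  have hsEq : ∀ α < γ, s ∩ Set.Iio (sSup (f α).2) = (f α).1 := by
    intro α hα
    apply Set.Subset.antisymm
    · rintro x ⟨hxs, hxlt⟩
      obtain ⟨β, hβ, hxβ⟩ := (hsmem x).1 hxs
      exact cohS α hα β hβ ⟨hxβ, hxlt⟩
    · intro x hx
      exact ⟨(hsmem x).2 ⟨α, hα, hx⟩, (hcond α hα).2.1 hx⟩
  have hcEq : ∀ α < γ, c ∩ Set.Iic (sSup (f α).2) = (f α).2 := by
    intro α hα
    apply Set.Subset.antisymm
    · rintro x ⟨hxc, hxle⟩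
      obtain ⟨β, hβ, hxβ⟩ := (hcmem x).1 hxc
      exact cohC α hα β hβ ⟨hxβ, hxle⟩
    · intro x hx
      exact ⟨(hcmem x).2 ⟨α, hα, hx⟩, le_csSup (hbdd α hα) hx⟩
  -- global bounds
  have hcbound : ∀ x ∈ c, x ≤ Ordinal.bsup γ (fun β _ => sSup (f β).2) := by
    intro x hx
    obtain ⟨β, hβ, hxβ⟩ := (hcmem x).1 hx
    exact (le_csSup (hbdd β hβ) hxβ).trans (Ordinal.le_bsup _ β hβ)
  have hBsupK : Ordinal.bsup γ (fun β _ => sSup (f β).2) < κ.ord :=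
    Cardinal.bsup_lt_ord_of_isRegular hκ.isRegular (Cardinal.lt_ord.1 hγ)
      (fun i hi => hσκ i hi)
  have hsubc : ∀ α < γ, (f α).2 ⊆ c := fun α hα x hx => (hcmem x).2 ⟨α, hα, hx⟩
  have hcne : c.Nonempty := by
    obtain ⟨e, he, _⟩ := hDγ 0 hγ0
    exact ⟨e, hsubc 0 hγ0 he⟩
  have hbddc : BddAbove c := ⟨_, fun x hx => hcbound x hx⟩
  have hsupcκ : sSup c < κ.ord := (csSup_le hcne hcbound).trans_lt hBsupK
  have hσlesup : ∀ α < γ, sSup (f α).2 ≤ sSup c := fun α hα =>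
    le_csSup hbddc (hsubc α hα (hσmem α hα))
  have hγsupc : γ ≤ sSup c := by
    obtain ⟨e, he, hge⟩ := hDγ 0 hγ0
    exact hge.trans (le_csSup hbddc (hsubc 0 hγ0 he))
  have hcsubκ : c ⊆ Set.Iio κ.ord := fun x hx =>
    lt_of_le_of_lt (le_csSup hbddc hx) hsupcκ
  -- facts about cbar
  have hbarmem : ∀ x, x ∈ cbar ↔ x ∈ c ∨ x = sSup c := by
    intro x; rw [hcbar]
    simp only [Set.mem_union, Set.mem_singleton_iff]
  have hbarbound : ∀ x ∈ cbar, x ≤ sSup c := by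
    intro x hx
    rcases (hbarmem x).1 hx with h | h
    · exact le_csSup hbddc h
    · exact le_of_eq h
  have hbarsubκ : cbar ⊆ Set.Iio κ.ord := fun x hx =>
    lt_of_le_of_lt (hbarbound x hx) hsupcκ
  have hsupbar : sSup cbar = sSup c := by
    apply le_antisymm
    · exact csSup_le ⟨sSup c, (hbarmem _).2 (Or.inr rfl)⟩ hbarbound
    · exact le_csSup ⟨sSup c, hbarbound⟩ ((hbarmem _).2 (Or.inr rfl))
  -- closedness of cbar
  have hclosedbar : IsClosedIn κ.ord cbar := by
    intro x hxκ hx0 hlim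
    by_cases hxeq : x = sSup c
    · exact (hbarmem x).2 (Or.inr hxeq)
    have hxlt : x < sSup c := by
      rcases lt_or_gt_of_ne hxeq with h | h
      · exact h
      · exfalso
        obtain ⟨t, ht, h1, h2⟩ := hlim (sSup c) h
        exact absurd (hbarbound t ht) (not_le.2 h1)
    obtain ⟨e, he, hxe⟩ := exists_lt_of_lt_csSup hcne hxlt
    obtain ⟨β, hβ, heβ⟩ := (hcmem e).1 he
    have hxσ : x < sSup (f β).2 := hxe.trans_le (le_csSup (hbdd β hβ) heβ)
    have hxmem : x ∈ (f β).2 := by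
      apply (hcond β hβ).1.2.2 x hxκ hx0
      intro b hb
      obtain ⟨t, ht, h1, h2⟩ := hlim b hb
      refine ⟨t, ?_, h1, h2⟩
      have htc : t ∈ c := by
        rcases (hbarmem t).1 ht with h | h
        · exact h
        · exact absurd (h ▸ h2) (not_lt.2 hxlt.le)
      rw [← hcEq β hβ]
      exact ⟨htc, (h2.trans hxσ).le⟩
    exact (hbarmem x).2 (Or.inl (hsubc β hβ hxmem))
  -- s is below the sup
  have hssub : s ⊆ Set.Iio (sSup cbar) := by
    intro x hx
    obtain ⟨β, hβ, hxβ⟩ := (hsmem x).1 hx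
    have : x < sSup (f β).2 := (hcond β hβ).2.1 hxβ
    rw [Set.mem_Iio, hsupbar]
    exact this.trans_le (hσlesup β hβ)
  have hmemc : ∀ α ∈ cbar, IsInaccOrd α → α ∈ c := by
    intro α hα hin
    rcases (hbarmem α).1 hα with h | hαeq
    · exact h
    obtain ⟨c', hc', hce⟩ := hin
    by_cases hγα : γ < α
    · by_cases hex : ∃ β, β < γ ∧ sSup (f β).2 = α
      · obtain ⟨β, hβ, hσ⟩ := hex
        exact hσ ▸ hsubc β hβ (hσmem β hβ)
      · exfalso
        push_neg at hex
        have hlt : ∀ β (hβ : β < γ), sSup (f β).2 < c'.ord := by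
          intro β hβ
          have h1 : sSup (f β).2 ≤ α := hαeq ▸ hσlesup β hβ
          exact hce ▸ lt_of_le_of_ne h1 (hex β hβ)
        have hBsupA : Ordinal.bsup γ (fun β _ => sSup (f β).2) < c'.ord :=
          Cardinal.bsup_lt_ord_of_isRegular hc'.isRegular
            (Cardinal.lt_ord.1 (hce ▸ hγα)) hlt
        have h2 : α ≤ Ordinal.bsup γ (fun β _ => sSup (f β).2) :=
          hαeq ▸ csSup_le hcne hcbound
        exact absurd (h2.trans_lt hBsupA) (by rw [← hce]; exact lt_irrefl α)
    · have hγeq : γ = α := le_antisymm (hαeq ▸ hγsupc) (not_lt.1 hγα)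
      obtain ⟨e, he, hge⟩ := hDγ 0 hγ0
      have h1 : e ≤ sSup c := le_csSup hbddc (hsubc 0 hγ0 he)
      have h2 : e = γ := le_antisymm (by rw [hγeq, hαeq]; exact h1) hge
      rw [← hγeq, ← h2]
      exact hsubc 0 hγ0 he
  -- the diamond-avoiding condition
  have hcond3 : ∀ α ∈ cbar, IsInaccOrd α → s ∩ Set.Iio α ≠ A α := by
    intro α hα hin
    obtain ⟨β, hβ, hαβ⟩ := (hcmem α).1 (hmemc α hα hin)
    have hασ : α ≤ sSup (f β).2 := le_csSup (hbdd β hβ) hαβ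
    have hsα : s ∩ Set.Iio α = (f β).1 ∩ Set.Iio α := by
      rw [← hsEq β hβ]
      ext x
      constructor
      · rintro ⟨h1, h2⟩
        exact ⟨⟨h1, lt_of_lt_of_le h2 hασ⟩, h2⟩
      · rintro ⟨⟨h1, _⟩, h2⟩
        exact ⟨h1, h2⟩
    rw [hsα]
    exact (hcond β hβ).2.2 α hαβ hin
  -- the full condition
  have hIsCond : IsCond κ.ord A (s, cbar) :=
    ⟨⟨hbarsubκ, ⟨sSup c, hsupcκ, hbarbound⟩, hclosedbar⟩, hssub, hcond3⟩
  refine ⟨hIsCond, ⟨hIsCond, ?_⟩, ?_⟩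
  · obtain ⟨e, he, hge⟩ := hDγ 0 hγ0
    exact ⟨e, (hbarmem e).2 (Or.inl (hsubc 0 hγ0 he)), not_lt.2 hge⟩
  · intro α hα
    refine ⟨hsEq α hα, ?_⟩
    apply Set.Subset.antisymm
    · rintro x ⟨hx, hxle⟩
      rcases (hbarmem x).1 hx with h | h
      · rw [← hcEq α hα]; exact ⟨h, hxle⟩
      · have h2 : sSup c = sSup (f α).2 :=
          le_antisymm (h ▸ hxle) (hσlesup α hα)
        rw [h, h2]
        exact hσmem α hα
    · intro x hx
      exact ⟨(hbarmem x).2 (Or.inl (hsubc α hα hx)), le_csSup (hbdd α hα) hx⟩
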